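/- Let ρ be a density matrix on ℂ^d and let Ψ, Φ, Γ be quantum channels on ℂ^d with Kraus operators {L_i}_{i=1}^m, {K_j}_{j=1}^n, {M_k}_{k=1}^p respectively. Then Q_ρ(Ψ)·Q_ρ(Φ)·Q_ρ(Γ) ≥ (1/8) · √( (Σ_{i,j} |tr([L_i, K_j†] ρ)|²) · (Σ_{i,k} |tr([L_i, M_k†] ρ)|²) · (Σ_{k,j} |tr([M_k, K_j†] ρ)|²) ). -/

import Mathlib

open Matrix
open scoped ComplexOrder

noncomputable section

/-- The positive semidefinite square root of a positive semidefinite matrix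
(the definition `Matrix.PosSemidef.sqrt` of the older Mathlib, since removed). -/
def Matrix.PosSemidef.sqrt {n 𝕜 : Type*} [Fintype n] [RCLike 𝕜] [DecidableEq n]
    {A : Matrix n n 𝕜} (hA : A.PosSemidef) : Matrix n n 𝕜 :=
  hA.1.eigenvectorUnitary.1 * diagonal ((↑) ∘ (√·) ∘ hA.1.eigenvalues) *
    (star hA.1.eigenvectorUnitary : Matrix n n 𝕜)

/-- Variance of an operator `K` with respect to a state `ρ`:
`V_ρ(K) = ½ tr((K†K + KK†)ρ) − |tr(Kρ)|²`. -/
def opVar {d : ℕ} (ρ K : Matrix (Fin d) (Fin d) ℂ) : ℝ :=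
  (((Kᴴ * K + K * Kᴴ) * ρ).trace).re / 2 - ‖((K * ρ).trace)‖ ^ 2

/-- Variance of a channel with Kraus operators `K i`: `V_ρ(Φ) = Σ_i V_ρ(K_i)`. -/
def chanVar {d n : ℕ} (ρ : Matrix (Fin d) (Fin d) ℂ)
    (K : Fin n → Matrix (Fin d) (Fin d) ℂ) : ℝ :=
  ∑ i, opVar ρ (K i)

/-- Wigner–Yanase skew information of a channel with Kraus operators `K i`:
`I_ρ(Φ) = ½ Σ_i ‖[√ρ, K_i]‖_F²`, where `√ρ` is the PSD square root of `ρ`. -/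
def chanSkew {d n : ℕ} (ρ : Matrix (Fin d) (Fin d) ℂ) (hρ : ρ.PosSemidef)
    (K : Fin n → Matrix (Fin d) (Fin d) ℂ) : ℝ :=
  (1 / 2) * ∑ i,
    (((hρ.sqrt * K i - K i * hρ.sqrt)ᴴ * (hρ.sqrt * K i - K i * hρ.sqrt)).trace).re

/-- Quantum uncertainty of a channel:
`Q_ρ(Φ) = √(V_ρ(Φ)² − (V_ρ(Φ) − I_ρ(Φ))²)`. -/
def chanQ {d n : ℕ} (ρ : Matrix (Fin d) (Fin d) ℂ) (hρ : ρ.PosSemidef)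
    (K : Fin n → Matrix (Fin d) (Fin d) ℂ) : ℝ :=
  Real.sqrt ((chanVar ρ K) ^ 2 - (chanVar ρ K - chanSkew ρ hρ K) ^ 2)

/-! ### Auxiliary lemmas -/

lemma Matrix.PosSemidef.sqrt_mul_self {d : ℕ} {A : Matrix (Fin d) (Fin d) ℂ}
    (hA : A.PosSemidef) : hA.sqrt * hA.sqrt = A := by
  have hU : (star hA.1.eigenvectorUnitary : Matrix (Fin d) (Fin d) ℂ) *
      hA.1.eigenvectorUnitary.1 = 1 := Unitary.coe_star_mul_self _
  have hD : diagonal ((RCLike.ofReal ∘ (fun x => √x) ∘ hA.1.eigenvalues) : Fin d → ℂ) *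
      diagonal (RCLike.ofReal ∘ (fun x => √x) ∘ hA.1.eigenvalues)
      = diagonal (RCLike.ofReal ∘ hA.1.eigenvalues) := by
    rw [diagonal_mul_diagonal]
    congr 1; funext i
    simp only [Function.comp_apply, ← RCLike.ofReal_mul,
      Real.mul_self_sqrt (hA.eigenvalues_nonneg i)]
  conv_rhs => rw [hA.1.spectral_theorem, Unitary.conjStarAlgAut_apply]
  simp only [Matrix.PosSemidef.sqrt, Matrix.mul_assoc]
  rw [← Matrix.mul_assoc (star _ : Matrix (Fin d) (Fin d) ℂ) _ _, hU, Matrix.one_mul,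
    ← Matrix.mul_assoc _ _ (star _ : Matrix (Fin d) (Fin d) ℂ), hD]

lemma Matrix.PosSemidef.sqrt_conjTranspose {d : ℕ} {A : Matrix (Fin d) (Fin d) ℂ}
    (hA : A.PosSemidef) : hA.sqrtᴴ = hA.sqrt := by
  simp only [Matrix.PosSemidef.sqrt, conjTranspose_mul, diagonal_conjTranspose,
    Matrix.mul_assoc]
  have hs : star (RCLike.ofReal ∘ (fun x => √x) ∘ hA.1.eigenvalues : Fin d → ℂ)
      = RCLike.ofReal ∘ (fun x => √x) ∘ hA.1.eigenvalues := by
    funext i; simp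
  rw [hs, ← Matrix.star_eq_conjTranspose, ← Matrix.star_eq_conjTranspose, star_star]

private lemma tcyc3 {d : ℕ} (A B C : Matrix (Fin d) (Fin d) ℂ) :
    (A * (B * C)).trace = (B * (C * A)).trace := by
  rw [Matrix.trace_mul_comm]; simp [Matrix.mul_assoc]

private lemma tcyc4 {d : ℕ} (A B C D : Matrix (Fin d) (Fin d) ℂ) :
    (A * (B * (C * D))).trace = (B * (C * (D * A))).trace := by
  rw [Matrix.trace_mul_comm]; simp [Matrix.mul_assoc]

/-- `Re tr(AᴴA)` as a sum of squared norms of entries. -/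
private lemma retr {d : ℕ} (A : Matrix (Fin d) (Fin d) ℂ) :
    (Aᴴ * A).trace.re = ∑ p : Fin d × Fin d, ‖A p.1 p.2‖ ^ 2 := by
  rw [Fintype.sum_prod_type]
  simp only [Matrix.trace, Matrix.mul_apply, Matrix.diag, Matrix.conjTranspose_apply,
    Complex.re_sum]
  rw [Finset.sum_comm]
  refine Finset.sum_congr rfl fun i _ => Finset.sum_congr rfl fun j _ => ?_
  rw [show (star (A i j) : ℂ) = (starRingEnd ℂ) (A i j) from rfl,
    ← Complex.normSq_eq_conj_mul_self]
  rw [Complex.ofReal_re, ← Complex.sq_norm]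

private lemma retr_nonneg {d : ℕ} (A : Matrix (Fin d) (Fin d) ℂ) :
    0 ≤ (Aᴴ * A).trace.re := by
  rw [retr]; positivity

open scoped ComplexInnerProductSpace in
/-- Cauchy–Schwarz for the trace. -/
private lemma cs_trace {d : ℕ} (X Y : Matrix (Fin d) (Fin d) ℂ) :
    ‖((X * Y).trace)‖ ^ 2 ≤ (Xᴴ * X).trace.re * (Yᴴ * Y).trace.re := by
  let a : EuclideanSpace ℂ (Fin d × Fin d) := WithLp.toLp 2 (fun p : Fin d × Fin d => star (X p.1 p.2))
  let b : EuclideanSpace ℂ (Fin d × Fin d) := WithLp.toLp 2 (fun p : Fin d × Fin d => Y p.2 p.1)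
  have hip : ⟪a, b⟫ = (X * Y).trace := by
    simp only [PiLp.inner_apply, RCLike.inner_apply, Matrix.trace, Matrix.diag, Matrix.mul_apply]
    rw [Fintype.sum_prod_type]
    simp [a, b]
    exact Finset.sum_congr rfl fun i _ => Finset.sum_congr rfl fun j _ => mul_comm _ _
  have hna : ‖a‖ ^ 2 = (Xᴴ * X).trace.re := by
    rw [EuclideanSpace.norm_eq, Real.sq_sqrt (by positivity), retr]
    exact Finset.sum_congr rfl fun p _ => by simp [a]
  have hnb : ‖b‖ ^ 2 = (Yᴴ * Y).trace.re := by
    rw [EuclideanSpace.norm_eq, Real.sq_sqrt (by positivity), retr]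
    rw [Fintype.sum_prod_type, Fintype.sum_prod_type, Finset.sum_comm]
  calc ‖((X * Y).trace)‖ ^ 2 = ‖⟪a, b⟫‖ ^ 2 := by rw [hip]
    _ ≤ (‖a‖ * ‖b‖) ^ 2 :=
        pow_le_pow_left₀ (norm_nonneg _) (norm_inner_le_norm (𝕜 := ℂ) a b) 2
    _ = (Xᴴ * X).trace.re * (Yᴴ * Y).trace.re := by rw [mul_pow, hna, hnb]

/-- The commutator trace identity. -/
private lemma claimA {d : ℕ} (ρ s L K : Matrix (Fin d) (Fin d) ℂ) (hs : s * s = ρ) (c : ℂ) :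
    ((L * Kᴴ - Kᴴ * L) * ρ).trace
      = ((s * L - L * s) * (s * Kᴴ + Kᴴ * s - (2 * c) • s)).trace := by
  simp only [Matrix.sub_mul, Matrix.mul_sub, Matrix.add_mul, Matrix.mul_add,
    Matrix.mul_smul, Matrix.smul_mul, trace_add, trace_sub, trace_smul, Matrix.mul_assoc, ← hs]
  rw [tcyc4 s L s Kᴴ, tcyc4 s L Kᴴ s, tcyc3 s L s, tcyc4 Kᴴ L s s]
  simp only [smul_eq_mul]; ring

/-- The anticommutator trace identity (complex form). -/
private lemma claimC {d : ℕ} (ρ s K : Matrix (Fin d) (Fin d) ℂ) (hs : s * s = ρ)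
    (hsh : sᴴ = s) (htr : ρ.trace = 1) (c c' : ℂ) (hc : (K * ρ).trace = c)
    (hc' : (Kᴴ * ρ).trace = c') (hcc : star (2 * c') = 2 * c) :
    ((s * Kᴴ + Kᴴ * s - (2 * c') • s)ᴴ * (s * Kᴴ + Kᴴ * s - (2 * c') • s)).trace
      + ((s * K - K * s)ᴴ * (s * K - K * s)).trace
      = 2 * ((Kᴴ * K + K * Kᴴ) * ρ).trace - 4 * (c' * c) := by
  simp only [conjTranspose_add, conjTranspose_sub, conjTranspose_mul, conjTranspose_smul,
    conjTranspose_conjTranspose, hsh, hcc]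
  simp only [Matrix.sub_mul, Matrix.mul_sub, Matrix.add_mul, Matrix.mul_add,
    Matrix.mul_smul, Matrix.smul_mul, trace_add, trace_sub, trace_smul, Matrix.mul_assoc, ← hs]
  rw [tcyc4 K s s Kᴴ, tcyc4 s s Kᴴ K, tcyc4 s Kᴴ K s, tcyc4 K s Kᴴ s, tcyc4 s K Kᴴ s,
      tcyc3 s s Kᴴ, tcyc3 s Kᴴ s, tcyc3 s K s,
      tcyc4 Kᴴ s s K, tcyc4 s s K Kᴴ, tcyc4 s K Kᴴ s, tcyc4 Kᴴ s K s]
  rw [hs, hc, hc', htr]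
  simp only [smul_eq_mul]; ring

private lemma star_trace {d : ℕ} (ρ : Matrix (Fin d) (Fin d) ℂ) (hρ : ρ.PosSemidef)
    (K : Matrix (Fin d) (Fin d) ℂ) :
    star ((Kᴴ * ρ).trace) = (K * ρ).trace := by
  rw [← Matrix.trace_conjTranspose, Matrix.conjTranspose_mul, Matrix.conjTranspose_conjTranspose,
    hρ.1, Matrix.trace_mul_comm]

/-- Per-operator skew term. -/
private def skR {d : ℕ} (ρ : Matrix (Fin d) (Fin d) ℂ) (hρ : ρ.PosSemidef)
    (A : Matrix (Fin d) (Fin d) ℂ) : ℝ :=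
  (((hρ.sqrt * A - A * hρ.sqrt)ᴴ * (hρ.sqrt * A - A * hρ.sqrt)).trace).re

/-- Per-operator anticommutator matrix. -/
private def Ymat {d : ℕ} (ρ : Matrix (Fin d) (Fin d) ℂ) (hρ : ρ.PosSemidef)
    (A : Matrix (Fin d) (Fin d) ℂ) : Matrix (Fin d) (Fin d) ℂ :=
  hρ.sqrt * Aᴴ + Aᴴ * hρ.sqrt - (2 * (Aᴴ * ρ).trace) • hρ.sqrt

private lemma yt_eq {d : ℕ} (ρ : Matrix (Fin d) (Fin d) ℂ) (hρ : ρ.PosSemidef)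
    (htr : ρ.trace = 1) (K : Matrix (Fin d) (Fin d) ℂ) :
    (((Ymat ρ hρ K)ᴴ * Ymat ρ hρ K).trace).re = 4 * opVar ρ K - skR ρ hρ K := by
  have hst := star_trace ρ hρ K
  have key := claimC ρ hρ.sqrt K hρ.sqrt_mul_self hρ.sqrt_conjTranspose htr
    ((K * ρ).trace) ((Kᴴ * ρ).trace) rfl rfl
    (by rw [star_mul', hst]; simp [mul_comm])
  have h1 : (((Ymat ρ hρ K)ᴴ * Ymat ρ hρ K).trace)
      = 2 * ((Kᴴ * K + K * Kᴴ) * ρ).trace - 4 * ((Kᴴ * ρ).trace * (K * ρ).trace)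
        - ((hρ.sqrt * K - K * hρ.sqrt)ᴴ * (hρ.sqrt * K - K * hρ.sqrt)).trace := by
    simp only [Ymat]; linear_combination key
  have habs : ((Kᴴ * ρ).trace * (K * ρ).trace).re = ‖((K * ρ).trace)‖ ^ 2 := by
    rw [← hst, Complex.sq_norm]
    simp [Complex.normSq_apply, Complex.mul_re]
  simp only [skR, opVar, h1]
  simp only [Complex.sub_re, Complex.mul_re,
    show ((2:ℂ)).re = 2 from rfl, show ((2:ℂ)).im = 0 from rfl,
    show ((4:ℂ)).re = 4 from rfl, show ((4:ℂ)).im = 0 from rfl, habs]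
  ring

private lemma skR_nonneg {d : ℕ} (ρ : Matrix (Fin d) (Fin d) ℂ) (hρ : ρ.PosSemidef)
    (A : Matrix (Fin d) (Fin d) ℂ) : 0 ≤ skR ρ hρ A :=
  retr_nonneg _

private lemma yt_nonneg {d : ℕ} (ρ : Matrix (Fin d) (Fin d) ℂ) (hρ : ρ.PosSemidef)
    (htr : ρ.trace = 1) (K : Matrix (Fin d) (Fin d) ℂ) :
    0 ≤ 4 * opVar ρ K - skR ρ hρ K := by
  rw [← yt_eq ρ hρ htr K]; exact retr_nonneg _

/-- Per-term bound. -/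
private lemma per_term {d : ℕ} (ρ : Matrix (Fin d) (Fin d) ℂ) (hρ : ρ.PosSemidef)
    (htr : ρ.trace = 1) (A B : Matrix (Fin d) (Fin d) ℂ) :
    ‖(((A * Bᴴ - Bᴴ * A) * ρ).trace)‖ ^ 2
      ≤ skR ρ hρ A * (4 * opVar ρ B - skR ρ hρ B) := by
  rw [claimA ρ hρ.sqrt A B hρ.sqrt_mul_self ((Bᴴ * ρ).trace), ← yt_eq ρ hρ htr B]
  exact cs_trace _ _

private lemma abs_tr_comm {d : ℕ} (ρ : Matrix (Fin d) (Fin d) ℂ) (hρ : ρ.PosSemidef)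
    (A B : Matrix (Fin d) (Fin d) ℂ) :
    ‖(((A * Bᴴ - Bᴴ * A) * ρ).trace)‖
      = ‖(((B * Aᴴ - Aᴴ * B) * ρ).trace)‖ := by
  have h : (((A * Bᴴ - Bᴴ * A) * ρ)ᴴ).trace = ((B * Aᴴ - Aᴴ * B) * ρ).trace := by
    rw [Matrix.conjTranspose_mul, Matrix.conjTranspose_sub, Matrix.conjTranspose_mul,
      Matrix.conjTranspose_mul, Matrix.conjTranspose_conjTranspose, hρ.1,
      Matrix.trace_mul_comm]
  rw [← h, Matrix.trace_conjTranspose]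
  exact (Complex.norm_conj _).symm

private lemma sum_skR {d n : ℕ} (ρ : Matrix (Fin d) (Fin d) ℂ) (hρ : ρ.PosSemidef)
    (L : Fin n → Matrix (Fin d) (Fin d) ℂ) :
    ∑ i, skR ρ hρ (L i) = 2 * chanSkew ρ hρ L := by
  simp only [chanSkew, skR]; ring

private lemma sum_yt {d n : ℕ} (ρ : Matrix (Fin d) (Fin d) ℂ) (hρ : ρ.PosSemidef)
    (L : Fin n → Matrix (Fin d) (Fin d) ℂ) :
    ∑ i, (4 * opVar ρ (L i) - skR ρ hρ (L i)) = 4 * chanVar ρ L - 2 * chanSkew ρ hρ L := by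
  rw [Finset.sum_sub_distrib, ← Finset.mul_sum]
  simp only [chanSkew, chanVar, skR]; ring

/-- Pair bound: double sum of squared commutator traces. -/
private lemma pair_bound {d m n : ℕ} (ρ : Matrix (Fin d) (Fin d) ℂ) (hρ : ρ.PosSemidef)
    (htr : ρ.trace = 1) (L : Fin m → Matrix (Fin d) (Fin d) ℂ)
    (K : Fin n → Matrix (Fin d) (Fin d) ℂ) :
    (∑ i, ∑ j, ‖(((L i * (K j)ᴴ - (K j)ᴴ * L i) * ρ).trace)‖ ^ 2)
      ≤ (2 * chanSkew ρ hρ L) * (4 * chanVar ρ K - 2 * chanSkew ρ hρ K) := by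
  have h1 : (∑ i, ∑ j, ‖(((L i * (K j)ᴴ - (K j)ᴴ * L i) * ρ).trace)‖ ^ 2)
      ≤ ∑ i, ∑ j, skR ρ hρ (L i) * (4 * opVar ρ (K j) - skR ρ hρ (K j)) :=
    Finset.sum_le_sum fun i _ => Finset.sum_le_sum fun j _ => per_term ρ hρ htr (L i) (K j)
  refine h1.trans (le_of_eq ?_)
  rw [← sum_skR ρ hρ L, ← sum_yt ρ hρ K, Finset.sum_mul_sum]

/-- Pair bound in terms of `chanQ`. -/
private lemma pairQ {d m n : ℕ} (ρ : Matrix (Fin d) (Fin d) ℂ) (hρ : ρ.PosSemidef)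
    (htr : ρ.trace = 1) (L : Fin m → Matrix (Fin d) (Fin d) ℂ)
    (K : Fin n → Matrix (Fin d) (Fin d) ℂ) :
    (∑ i, ∑ j, ‖(((L i * (K j)ᴴ - (K j)ᴴ * L i) * ρ).trace)‖ ^ 2)
      ≤ 4 * (chanQ ρ hρ L * chanQ ρ hρ K) := by
  have hS0' : (0:ℝ) ≤ ∑ i, ∑ j, ‖(((L i * (K j)ᴴ - (K j)ᴴ * L i) * ρ).trace)‖ ^ 2 :=
    Finset.sum_nonneg fun i _ => Finset.sum_nonneg fun j _ => sq_nonneg _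
  set S := ∑ i, ∑ j, ‖(((L i * (K j)ᴴ - (K j)ᴴ * L i) * ρ).trace)‖ ^ 2 with hS
  have hS0 : 0 ≤ S := hS0'
  set SL := 2 * chanSkew ρ hρ L with hSL
  set SK := 2 * chanSkew ρ hρ K with hSK
  set TL := 4 * chanVar ρ L - 2 * chanSkew ρ hρ L with hTL
  set TK := 4 * chanVar ρ K - 2 * chanSkew ρ hρ K with hTK
  have hSL0 : 0 ≤ SL := by
    rw [hSL, ← sum_skR ρ hρ L]
    exact Finset.sum_nonneg fun i _ => skR_nonneg ρ hρ (L i)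
  have hSK0 : 0 ≤ SK := by
    rw [hSK, ← sum_skR ρ hρ K]
    exact Finset.sum_nonneg fun j _ => skR_nonneg ρ hρ (K j)
  have hTL0 : 0 ≤ TL := by
    rw [hTL, ← sum_yt ρ hρ L]
    exact Finset.sum_nonneg fun i _ => yt_nonneg ρ hρ htr (L i)
  have hTK0 : 0 ≤ TK := by
    rw [hTK, ← sum_yt ρ hρ K]
    exact Finset.sum_nonneg fun j _ => yt_nonneg ρ hρ htr (K j)
  have hb1 : S ≤ SL * TK := pair_bound ρ hρ htr L K
  have hb2 : S ≤ SK * TL := by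
    have hswap : S = ∑ j, ∑ i, ‖(((K j * (L i)ᴴ - (L i)ᴴ * K j) * ρ).trace)‖ ^ 2 := by
      rw [hS, Finset.sum_comm]
      refine Finset.sum_congr rfl fun j _ => Finset.sum_congr rfl fun i _ => ?_
      rw [abs_tr_comm ρ hρ (L i) (K j)]
    rw [hswap]
    exact pair_bound ρ hρ htr K L
  have hQL : chanQ ρ hρ L = Real.sqrt (SL * TL / 4) := by
    simp only [chanQ]
    congr 1
    rw [hSL, hTL]; ring
  have hQK : chanQ ρ hρ K = Real.sqrt (SK * TK / 4) := by
    simp only [chanQ]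
    congr 1
    rw [hSK, hTK]; ring
  have hprod : chanQ ρ hρ L * chanQ ρ hρ K = Real.sqrt ((SL * TL / 4) * (SK * TK / 4)) := by
    rw [hQL, hQK, ← Real.sqrt_mul (by positivity)]
  clear_value S SL SK TL TK
  have hsq : (S / 4) ^ 2 ≤ (SL * TL / 4) * (SK * TK / 4) := by
    have h := mul_le_mul hb1 hb2 hS0 (by positivity : (0:ℝ) ≤ SL * TK)
    have e1 : (S / 4) ^ 2 = S * S / 16 := by ring
    have e2 : (SL * TL / 4) * (SK * TK / 4) = SL * TK * (SK * TL) / 16 := by ring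
    rw [e1, e2]
    linarith
  have hfin : S / 4 ≤ Real.sqrt ((SL * TL / 4) * (SK * TK / 4)) := by
    rw [show S / 4 = Real.sqrt ((S / 4) ^ 2) from (Real.sqrt_sq (by positivity)).symm]
    exact Real.sqrt_le_sqrt hsq
  rw [← hprod] at hfin
  linarith

/-- Product-form uncertainty relation for three quantum channels. -/
theorem stmt_12 {d m n p : ℕ}
    (ρ : Matrix (Fin d) (Fin d) ℂ) (hρ : ρ.PosSemidef) (htr : ρ.trace = 1)
    (L : Fin m → Matrix (Fin d) (Fin d) ℂ) (hL : ∑ i, (L i)ᴴ * L i = 1)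
    (K : Fin n → Matrix (Fin d) (Fin d) ℂ) (hK : ∑ j, (K j)ᴴ * K j = 1)
    (M : Fin p → Matrix (Fin d) (Fin d) ℂ) (hM : ∑ k, (M k)ᴴ * M k = 1) :
    chanQ ρ hρ L * chanQ ρ hρ K * chanQ ρ hρ M ≥
      (1 / 8) * Real.sqrt
        ((∑ i, ∑ j, ‖(((L i * (K j)ᴴ - (K j)ᴴ * L i) * ρ).trace)‖ ^ 2) *
         (∑ i, ∑ k, ‖(((L i * (M k)ᴴ - (M k)ᴴ * L i) * ρ).trace)‖ ^ 2) *
         (∑ k, ∑ j, ‖(((M k * (K j)ᴴ - (K j)ᴴ * M k) * ρ).trace)‖ ^ 2)) := by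
  have h10' : (0:ℝ) ≤ ∑ i, ∑ j, ‖(((L i * (K j)ᴴ - (K j)ᴴ * L i) * ρ).trace)‖ ^ 2 :=
    Finset.sum_nonneg fun i _ => Finset.sum_nonneg fun j _ => sq_nonneg _
  have h20' : (0:ℝ) ≤ ∑ i, ∑ k, ‖(((L i * (M k)ᴴ - (M k)ᴴ * L i) * ρ).trace)‖ ^ 2 :=
    Finset.sum_nonneg fun i _ => Finset.sum_nonneg fun k _ => sq_nonneg _
  have h30' : (0:ℝ) ≤ ∑ k, ∑ j, ‖(((M k * (K j)ᴴ - (K j)ᴴ * M k) * ρ).trace)‖ ^ 2 :=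
    Finset.sum_nonneg fun k _ => Finset.sum_nonneg fun j _ => sq_nonneg _
  set S1 := ∑ i, ∑ j, ‖(((L i * (K j)ᴴ - (K j)ᴴ * L i) * ρ).trace)‖ ^ 2 with hS1
  set S2 := ∑ i, ∑ k, ‖(((L i * (M k)ᴴ - (M k)ᴴ * L i) * ρ).trace)‖ ^ 2 with hS2
  set S3 := ∑ k, ∑ j, ‖(((M k * (K j)ᴴ - (K j)ᴴ * M k) * ρ).trace)‖ ^ 2 with hS3
  have h10 : 0 ≤ S1 := h10'
  have h20 : 0 ≤ S2 := h20'
  have h30 : 0 ≤ S3 := h30'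
  set QL := chanQ ρ hρ L with hQL
  set QK := chanQ ρ hρ K with hQK
  set QM := chanQ ρ hρ M with hQM
  have hQL0 : 0 ≤ QL := Real.sqrt_nonneg _
  have hQK0 : 0 ≤ QK := Real.sqrt_nonneg _
  have hQM0 : 0 ≤ QM := Real.sqrt_nonneg _
  have hb1 : S1 ≤ 4 * (QL * QK) := pairQ ρ hρ htr L K
  have hb2 : S2 ≤ 4 * (QL * QM) := pairQ ρ hρ htr L M
  have hb3 : S3 ≤ 4 * (QM * QK) := pairQ ρ hρ htr M K
  clear_value S1 S2 S3 QL QK QM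
  have hprod : S1 * S2 * S3 ≤ (8 * (QL * QK * QM)) ^ 2 := by
    have h12 : S1 * S2 ≤ (4 * (QL * QK)) * (4 * (QL * QM)) :=
      mul_le_mul hb1 hb2 h20 (by positivity)
    have h123 : S1 * S2 * S3 ≤ ((4 * (QL * QK)) * (4 * (QL * QM))) * (4 * (QM * QK)) :=
      mul_le_mul h12 hb3 h30 (by positivity)
    nlinarith
  have hs : Real.sqrt (S1 * S2 * S3) ≤ 8 * (QL * QK * QM) := by
    have h := Real.sqrt_le_sqrt hprod
    rwa [Real.sqrt_sq (by positivity)] at h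
  rw [ge_iff_le]
  calc (1 / 8) * Real.sqrt (S1 * S2 * S3) ≤ (1 / 8) * (8 * (QL * QK * QM)) := by linarith
    _ = QL * QK * QM := by ring
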